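/- Let Ω be a finite probability space with A0 ∈ A and Z ∈ ℝ (finitely many values), P(A0 = a) = π(a) > 0 for all a, and h(a|z) = P(A0 = a | Z = z) > 0 for all z in the support of Z. Then Σ_a π(a) · E[ (1 − π(a)/h(a|Z)) · Z | A0 = a ] = 0; i.e., the hindsight advantages A^z(x,a) = E[(1 − π(a)/h(a|Z)) Z | A0 = a] average to zero under the policy. -/

import Mathlib

open Finset
open scoped Classical

/-- Return-conditional HCA advantages average to zero under the policy
(Statement 12): on a finite probability space with `π a = P(A₀ = a) > 0` and
`h a z = P(A₀ = a | Z = z) > 0` on the support of `Z`,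
`Σ_a π(a) · E[ (1 − π(a)/h(a|Z)) · Z | A₀ = a ] = 0`. -/
theorem stmt_12 {Ω A : Type*} [Fintype Ω] [Fintype A]
    (p : Ω → ℝ) (hp : ∀ ω, 0 ≤ p ω) (hsum : ∑ ω, p ω = 1)
    (A0 : Ω → A) (Z : Ω → ℝ) (π : A → ℝ)
    (hπ : ∀ a, π a = ∑ ω ∈ univ.filter (fun ω' => A0 ω' = a), p ω)
    (hπpos : ∀ a, 0 < π a)
    (h : A → ℝ → ℝ)
    (hdef : ∀ a z, 0 < ∑ ω ∈ univ.filter (fun ω' => Z ω' = z), p ω →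
      h a z = (∑ ω ∈ univ.filter (fun ω' => A0 ω' = a ∧ Z ω' = z), p ω) /
              (∑ ω ∈ univ.filter (fun ω' => Z ω' = z), p ω))
    (hpos : ∀ a z, 0 < ∑ ω ∈ univ.filter (fun ω' => Z ω' = z), p ω → 0 < h a z) :
    ∑ a, π a *
      ((∑ ω ∈ univ.filter (fun ω' => A0 ω' = a),
          p ω * ((1 - π a / h a (Z ω)) * Z ω)) / π a) = 0 := by
  have hπne : ∀ a, π a ≠ 0 := fun a => (hπpos a).ne'
  have hπsum : ∑ a, π a = 1 := by
    simp_rw [hπ]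
    exact (Finset.sum_fiberwise univ A0 p).trans hsum
  have e1 : ∑ a, π a *
      ((∑ ω ∈ univ.filter (fun ω' => A0 ω' = a),
          p ω * ((1 - π a / h a (Z ω)) * Z ω)) / π a)
      = ∑ a, ∑ ω ∈ univ.filter (fun ω' => A0 ω' = a),
          p ω * ((1 - π (A0 ω) / h (A0 ω) (Z ω)) * Z ω) := by
    refine Finset.sum_congr rfl fun a _ => ?_
    rw [mul_comm, div_mul_cancel₀ _ (hπne a)]
    refine Finset.sum_congr rfl fun ω hω => ?_
    simp only [Finset.mem_filter] at hω
    rw [hω.2]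
  have e2 : ∑ a, ∑ ω ∈ univ.filter (fun ω' => A0 ω' = a),
      p ω * ((1 - π (A0 ω) / h (A0 ω) (Z ω)) * Z ω)
      = ∑ ω, p ω * ((1 - π (A0 ω) / h (A0 ω) (Z ω)) * Z ω) :=
    Finset.sum_fiberwise univ A0 _
  rw [e1, e2]
  have key : ∑ ω, p ω * (π (A0 ω) / h (A0 ω) (Z ω) * Z ω) = ∑ ω, p ω * Z ω := by
    have fib1 : ∑ z ∈ univ.image Z, ∑ ω ∈ univ.filter (fun ω' => Z ω' = z),
        p ω * (π (A0 ω) / h (A0 ω) (Z ω) * Z ω)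
        = ∑ ω, p ω * (π (A0 ω) / h (A0 ω) (Z ω) * Z ω) :=
      Finset.sum_fiberwise_of_maps_to
        (fun ω _ => Finset.mem_image_of_mem Z (Finset.mem_univ ω)) _
    have fib2 : ∑ z ∈ univ.image Z, ∑ ω ∈ univ.filter (fun ω' => Z ω' = z), p ω * Z ω
        = ∑ ω, p ω * Z ω :=
      Finset.sum_fiberwise_of_maps_to
        (fun ω _ => Finset.mem_image_of_mem Z (Finset.mem_univ ω)) _
    rw [← fib1, ← fib2]
    refine Finset.sum_congr rfl fun z _ => ?_
    by_cases hSz : ∑ ω ∈ univ.filter (fun ω' => Z ω' = z), p ω = 0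
    · have hz0 : ∀ ω ∈ univ.filter (fun ω' => Z ω' = z), p ω = 0 := fun ω hω =>
        (Finset.sum_eq_zero_iff_of_nonneg (fun ω _ => hp ω)).1 hSz ω hω
      rw [Finset.sum_eq_zero fun ω hω => by rw [hz0 ω hω, zero_mul],
        Finset.sum_eq_zero fun ω hω => by rw [hz0 ω hω, zero_mul]]
    · have hSzpos : 0 < ∑ ω ∈ univ.filter (fun ω' => Z ω' = z), p ω :=
        lt_of_le_of_ne (Finset.sum_nonneg fun ω _ => hp ω) (Ne.symm hSz)
      have lhs1 : ∑ ω ∈ univ.filter (fun ω' => Z ω' = z),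
          p ω * (π (A0 ω) / h (A0 ω) (Z ω) * Z ω)
          = ∑ ω ∈ univ.filter (fun ω' => Z ω' = z),
          p ω * (π (A0 ω) / h (A0 ω) z * z) := by
        refine Finset.sum_congr rfl fun ω hω => ?_
        simp only [Finset.mem_filter] at hω
        rw [hω.2]
      have rhs1 : ∑ ω ∈ univ.filter (fun ω' => Z ω' = z), p ω * Z ω
          = z * ∑ ω ∈ univ.filter (fun ω' => Z ω' = z), p ω := by
        rw [Finset.mul_sum]
        refine Finset.sum_congr rfl fun ω hω => ?_
        simp only [Finset.mem_filter] at hω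
        rw [hω.2, mul_comm]
      have fib3 : ∑ a, ∑ ω ∈ (univ.filter (fun ω' => Z ω' = z)).filter
            (fun ω' => A0 ω' = a), p ω * (π (A0 ω) / h (A0 ω) z * z)
          = ∑ ω ∈ univ.filter (fun ω' => Z ω' = z),
            p ω * (π (A0 ω) / h (A0 ω) z * z) :=
        Finset.sum_fiberwise_of_maps_to (fun ω _ => Finset.mem_univ (A0 ω)) _
      rw [lhs1, rhs1, ← fib3]
      have step : ∀ a : A,
          ∑ ω ∈ (univ.filter (fun ω' => Z ω' = z)).filter (fun ω' => A0 ω' = a),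
            p ω * (π (A0 ω) / h (A0 ω) z * z)
          = π a * (z * ∑ ω ∈ univ.filter (fun ω' => Z ω' = z), p ω) := by
        intro a
        have hfilter : (univ.filter (fun ω' => Z ω' = z)).filter (fun ω' => A0 ω' = a)
            = univ.filter (fun ω' => A0 ω' = a ∧ Z ω' = z) := by
          rw [Finset.filter_filter]
          exact Finset.filter_congr fun ω _ => by tauto
        have hSaz : (0:ℝ) < ∑ ω ∈ univ.filter (fun ω' => A0 ω' = a ∧ Z ω' = z), p ω := by
          have hh := hpos a z hSzpos
          rw [hdef a z hSzpos] at hh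
          rcases div_pos_iff.1 hh with ⟨h1, _⟩ | ⟨_, h2⟩
          · exact h1
          · exact absurd h2 (not_lt.2 hSzpos.le)
        have hsumconst : ∑ ω ∈ (univ.filter (fun ω' => Z ω' = z)).filter
              (fun ω' => A0 ω' = a), p ω * (π (A0 ω) / h (A0 ω) z * z)
            = (π a / h a z * z) * ∑ ω ∈ univ.filter (fun ω' => A0 ω' = a ∧ Z ω' = z), p ω := by
          rw [hfilter, Finset.mul_sum]
          refine Finset.sum_congr rfl fun ω hω => ?_
          simp only [Finset.mem_filter] at hω
          rw [hω.2.1, mul_comm]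
        rw [hsumconst, hdef a z hSzpos]
        field_simp
      rw [Finset.sum_congr rfl fun a _ => step a, ← Finset.sum_mul, hπsum, one_mul]
  have expand : ∀ ω, p ω * ((1 - π (A0 ω) / h (A0 ω) (Z ω)) * Z ω)
      = p ω * Z ω - p ω * (π (A0 ω) / h (A0 ω) (Z ω) * Z ω) := fun ω => by ring
  simp_rw [expand]
  rw [Finset.sum_sub_distrib, key, sub_self]
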